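/- For Ω₀ > 0 and real ω, ∫_{-∞}^{∞} 2Ω₀ sech(Ω₀ t) · (1 - 2 sech²(Ω₀ t)) · cos(ωt) dt = -2π (ω/Ω₀)² / cosh(πω/(2Ω₀)). -/

import Mathlib

open Real MeasureTheory
open Set

noncomputable def sech (x : ℝ) : ℝ := (Real.cosh x)⁻¹

lemma cpow_pos_eq {x : ℝ} (hx : 0 < x) (s : ℂ) :
    (x : ℂ) ^ s = Complex.exp (s * Real.log x) := by
  rw [Complex.cpow_def_of_ne_zero (by exact_mod_cast hx.ne'), ← Complex.ofReal_log hx.le,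
    mul_comm]

lemma ofReal_pos_eq {x : ℝ} (hx : 0 < x) :
    (x : ℂ) = Complex.exp ((Real.log x : ℝ) : ℂ) := by
  rw [← Complex.ofReal_exp, Real.exp_log hx]

lemma image_Ioo_div : (fun t : ℝ => t / (1 - t)) '' Ioo 0 1 = Ioi 0 := by
  ext y
  simp only [mem_image, mem_Ioo, mem_Ioi]
  constructor
  · rintro ⟨t, ⟨h0, h1⟩, rfl⟩
    exact div_pos h0 (by linarith)
  · intro hy
    refine ⟨y / (1 + y), ⟨div_pos hy (by linarith), (div_lt_one (by linarith)).mpr (by linarith)⟩, ?_⟩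
    have h1 : 1 + y ≠ 0 := by positivity
    field_simp
    ring

lemma betaIoi {u v : ℂ} (hu : 0 < u.re) (hv : 0 < v.re) :
    ∫ y in Ioi (0:ℝ), (y : ℂ) ^ (u - 1) / ((1 + y : ℝ) : ℂ) ^ (u + v)
      = Complex.Gamma u * Complex.Gamma v / Complex.Gamma (u + v) := by
  have hG := Complex.Gamma_mul_Gamma_eq_betaIntegral hu hv
  have hGne : Complex.Gamma (u + v) ≠ 0 :=
    Complex.Gamma_ne_zero_of_re_pos (by simp [Complex.add_re]; positivity)
  have hder : ∀ t ∈ Ioo (0:ℝ) 1,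
      HasDerivWithinAt (fun t : ℝ => t / (1 - t)) (((1 - t) ^ 2)⁻¹) (Ioo 0 1) t := by
    intro t ht
    have hne : 1 - t ≠ 0 := by simp only [mem_Ioo] at ht; intro h; linarith [ht.2]
    have := (hasDerivAt_id t).div ((hasDerivAt_id t).const_sub 1) hne
    refine HasDerivAt.hasDerivWithinAt (this.congr_deriv ?_)
    simp only [id]
    ring
  have hinj : InjOn (fun t : ℝ => t / (1 - t)) (Ioo 0 1) := by
    intro a ha b hb h
    simp only [mem_Ioo] at ha hb
    have h1 : 1 - a ≠ 0 := by intro h; linarith [ha.2]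
    have h2 : 1 - b ≠ 0 := by intro h; linarith [hb.2]
    field_simp at h
    linarith
  have key := integral_image_eq_integral_abs_deriv_smul measurableSet_Ioo hder hinj
    (fun y => (y : ℂ) ^ (u - 1) / ((1 + y : ℝ) : ℂ) ^ (u + v))
  rw [image_Ioo_div] at key
  rw [key]
  have hBeta : Complex.betaIntegral u v
      = ∫ t in Ioo (0:ℝ) 1, (t : ℂ) ^ (u - 1) * (1 - (t:ℂ)) ^ (v - 1) := by
    rw [Complex.betaIntegral, intervalIntegral.integral_of_le zero_le_one,
      MeasureTheory.integral_Ioc_eq_integral_Ioo]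
  have heq : ∫ t in Ioo (0:ℝ) 1,
      |((1 - t) ^ 2)⁻¹| • ((↑(t / (1 - t)) : ℂ) ^ (u - 1)
        / ((1 + t / (1 - t) : ℝ) : ℂ) ^ (u + v))
      = ∫ t in Ioo (0:ℝ) 1, (t : ℂ) ^ (u - 1) * (1 - (t:ℂ)) ^ (v - 1) := by
    apply setIntegral_congr_fun measurableSet_Ioo
    intro t ht
    simp only [mem_Ioo] at ht
    obtain ⟨ht0, ht1⟩ := ht
    have h1t : (0:ℝ) < 1 - t := by linarith
    have hft : (0:ℝ) < t / (1 - t) := div_pos ht0 h1t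
    have hsum : 1 + t / (1 - t) = (1 - t)⁻¹ := by field_simp; ring
    have habs : |((1 - t) ^ 2)⁻¹| = ((1 - t) ^ 2)⁻¹ := abs_of_pos (by positivity)
    have hlogdiv : Real.log (t / (1 - t)) = Real.log t - Real.log (1 - t) :=
      Real.log_div ht0.ne' h1t.ne'
    have hloginv : Real.log ((1 - t)⁻¹) = -Real.log (1 - t) := Real.log_inv _
    have hcast : ((((1 - t) ^ 2)⁻¹ : ℝ) : ℂ)
        = Complex.exp (-(2 * (Real.log (1 - t) : ℂ))) := by
      rw [ofReal_pos_eq (by positivity : (0:ℝ) < ((1 - t) ^ 2)⁻¹), Real.log_inv,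
        Real.log_pow]
      push_cast
      ring_nf
    have h1tc : ((1 : ℂ) - (t:ℂ)) = ((1 - t : ℝ) : ℂ) := by push_cast; ring
    show |((1 - t) ^ 2)⁻¹| • ((↑(t / (1 - t)) : ℂ) ^ (u - 1) / (↑(1 + t / (1 - t)) : ℂ) ^ (u + v))
      = (t : ℂ) ^ (u - 1) * (1 - (t:ℂ)) ^ (v - 1)
    rw [Complex.real_smul, habs, hcast, hsum, h1tc,
      cpow_pos_eq hft, cpow_pos_eq (by positivity : (0:ℝ) < (1-t)⁻¹),
      cpow_pos_eq ht0, cpow_pos_eq h1t, hlogdiv, hloginv,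
      ← Complex.exp_sub, ← Complex.exp_add, ← Complex.exp_add]
    congr 1
    push_cast
    ring
  rw [heq, ← hBeta]
  field_simp [hG]
  rw [hG]
  ring
lemma B1 {u : ℂ} (h0 : 0 < u.re) (h1 : u.re < 1) :
    ∫ y in Ioi (0:ℝ), (y : ℂ) ^ (u - 1) / ((1 + y : ℝ) : ℂ)
      = (Real.pi : ℂ) / Complex.sin ((Real.pi : ℂ) * u) := by
  have hv : 0 < (1 - u).re := by
    simp only [Complex.sub_re, Complex.one_re]; linarith
  have h := betaIoi h0 hv
  rw [show u + (1 - u) = 1 by ring, Complex.Gamma_one] at h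
  simp only [Complex.cpow_one, div_one] at h
  rw [h, Complex.Gamma_mul_Gamma_one_sub u]

lemma B3 {u : ℂ} (h0 : 0 < u.re) (h3 : u.re < 3) (hu1 : u ≠ 1) (hu2 : u ≠ 2) :
    ∫ y in Ioi (0:ℝ), (y : ℂ) ^ (u - 1) / ((1 + y : ℝ) : ℂ) ^ (3 : ℂ)
      = (2 - u) * (1 - u) * ((Real.pi : ℂ) / Complex.sin ((Real.pi : ℂ) * u)) / 2 := by
  have hv : 0 < (3 - u).re := by
    simp only [Complex.sub_re, Complex.re_ofNat]; linarith
  have h := betaIoi h0 hv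
  rw [show u + (3 - u) = 3 by ring] at h
  have hG3 : Complex.Gamma 3 = 2 := by
    rw [show (3:ℂ) = (2:ℕ) + 1 by norm_num, Complex.Gamma_nat_eq_factorial]
    norm_num
  have hstep : Complex.Gamma (3 - u) = (2 - u) * ((1 - u) * Complex.Gamma (1 - u)) := by
    rw [show (3:ℂ) - u = (2 - u) + 1 by ring, Complex.Gamma_add_one _ (sub_ne_zero.mpr (Ne.symm hu2)),
      show (2:ℂ) - u = (1 - u) + 1 by ring, Complex.Gamma_add_one _ (sub_ne_zero.mpr (Ne.symm hu1))]
  rw [h, hG3, hstep, ← Complex.Gamma_mul_Gamma_one_sub u]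
  ring
lemma sech_pos (x : ℝ) : 0 < sech x := inv_pos.mpr (Real.cosh_pos x)

lemma sech_le_one (x : ℝ) : sech x ≤ 1 :=
  inv_le_one_of_one_le₀ (Real.one_le_cosh x)

lemma continuous_sech : Continuous sech :=
  Real.continuous_cosh.inv₀ (fun x => (Real.cosh_pos x).ne')

lemma sech_le (x : ℝ) : sech x ≤ 2 * Real.exp (-|x|) := by
  have h : Real.exp |x| ≤ 2 * Real.cosh x := by
    rw [Real.cosh_eq]
    rcases abs_cases x with ⟨h1, _⟩ | ⟨h1, _⟩ <;> rw [h1] <;>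
      nlinarith [Real.exp_pos x, Real.exp_pos (-x)]
  calc sech x ≤ (Real.exp |x| / 2)⁻¹ := by
        apply inv_anti₀ (by positivity)
        linarith
    _ = 2 * Real.exp (-|x|) := by
        rw [Real.exp_neg]
        field_simp

lemma integrable_exp_neg_abs' : Integrable (fun x : ℝ => Real.exp (-|x|)) := by
  have h1 : IntegrableOn (fun x : ℝ => Real.exp (-|x|)) (Ioi 0) := by
    apply IntegrableOn.congr_fun (exp_neg_integrableOn_Ioi 0 one_pos)
      (fun x hx => by simp [abs_of_pos (mem_Ioi.mp hx)]) measurableSet_Ioi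
  have h2 : IntegrableOn (fun x : ℝ => Real.exp (-|x|)) (Iic 0) := by
    apply IntegrableOn.congr_fun (integrableOn_exp_Iic (0:ℝ))
      (fun x hx => by simp [abs_of_nonpos (mem_Iic.mp hx)]) measurableSet_Iic
  have := h2.union h1
  rw [Iic_union_Ioi] at this
  exact integrableOn_univ.mp this

lemma integrable_sech : Integrable sech := by
  apply Integrable.mono' (integrable_exp_neg_abs'.const_mul 2)
    continuous_sech.aestronglyMeasurable
  filter_upwards with x
  rw [Real.norm_eq_abs, abs_of_pos (sech_pos x)]
  exact sech_le x

lemma integrable_sech_pow_cos (k : ℕ) (hk : k ≠ 0) (α : ℝ) :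
    Integrable (fun s : ℝ => sech s ^ k * Real.cos (α * s)) := by
  apply Integrable.mono' integrable_sech
    (((continuous_sech.pow k).mul (Real.continuous_cos.comp
      (continuous_const.mul continuous_id))).aestronglyMeasurable)
  filter_upwards with x
  show ‖sech x ^ k * Real.cos (α * x)‖ ≤ sech x
  rw [Real.norm_eq_abs, abs_mul, abs_pow, abs_of_pos (sech_pos x)]
  calc sech x ^ k * |Real.cos (α * x)| ≤ sech x ^ k * 1 := by
        apply mul_le_mul_of_nonneg_left (Real.abs_cos_le_one _) (pow_nonneg (sech_pos x).le k)
    _ ≤ sech x := by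
        rw [mul_one]
        calc sech x ^ k ≤ sech x ^ 1 :=
              pow_le_pow_of_le_one (sech_pos x).le (sech_le_one x)
                (Nat.one_le_iff_ne_zero.mpr hk)
          _ = sech x := pow_one _
lemma sech_exp (s : ℝ) : 2 * Real.exp s / (1 + (Real.exp s) ^ 2) = sech s := by
  rw [sech, Real.cosh_eq, Real.exp_neg]
  have h := (Real.exp_pos s).ne'
  field_simp
  ring

/-- substitution x = exp s -/
lemma step1 (k : ℕ) (α : ℝ) :
    (∫ s : ℝ, sech s ^ k * Real.cos (α * s))
      = ∫ x in Ioi (0:ℝ), x⁻¹ * ((2 * x / (1 + x ^ 2)) ^ k * Real.cos (α * Real.log x)) := by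
  have himg : Real.exp '' univ = Ioi 0 := by rw [image_univ, Real.range_exp]
  have hder : ∀ s ∈ (univ : Set ℝ), HasDerivWithinAt Real.exp (Real.exp s) univ s :=
    fun s _ => (Real.hasDerivAt_exp s).hasDerivWithinAt
  have key := integral_image_eq_integral_abs_deriv_smul MeasurableSet.univ hder
    Real.exp_injective.injOn
    (fun x => x⁻¹ * ((2 * x / (1 + x ^ 2)) ^ k * Real.cos (α * Real.log x)))
  rw [himg] at key
  rw [key, MeasureTheory.setIntegral_univ]
  apply integral_congr_ae
  filter_upwards with s
  have he := (Real.exp_pos s).ne'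
  rw [abs_of_pos (Real.exp_pos s), Real.log_exp, smul_eq_mul, ← sech_exp]
  field_simp

noncomputable def Hc (k : ℕ) (α : ℝ) (x : ℝ) : ℂ :=
  ((x⁻¹ * (2 * x / (1 + x ^ 2)) ^ k : ℝ) : ℂ)
    * Complex.exp ((Complex.I * α) * (Real.log x : ℂ))

lemma Hc_re (k : ℕ) (α x : ℝ) :
    (Hc k α x).re = x⁻¹ * ((2 * x / (1 + x ^ 2)) ^ k * Real.cos (α * Real.log x)) := by
  have h : (Complex.I * α) * (Real.log x : ℂ) = ((α * Real.log x : ℝ) : ℂ) * Complex.I := by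
    push_cast; ring
  rw [Hc, h, Complex.re_ofReal_mul, Complex.exp_ofReal_mul_I_re]
  ring

lemma Hc_norm (k : ℕ) (α : ℝ) {x : ℝ} (hx : 0 < x) :
    ‖Hc k α x‖ = x⁻¹ * (2 * x / (1 + x ^ 2)) ^ k := by
  have h1 : ((Complex.I * α) * (Real.log x : ℂ)).re = 0 := by simp
  rw [Hc, norm_mul, Complex.norm_exp, h1, Real.exp_zero,
    mul_one, Complex.norm_real, Real.norm_eq_abs, abs_of_nonneg]
  positivity

lemma Hc_contOn (k : ℕ) (α : ℝ) : ContinuousOn (Hc k α) (Ioi 0) := by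
  apply ContinuousOn.mul
  · apply Complex.continuous_ofReal.comp_continuousOn
    apply ContinuousOn.mul
    · exact continuousOn_inv₀.mono fun x hx => (mem_Ioi.mp hx).ne'
    · exact ((Continuous.div (continuous_const.mul continuous_id)
        (continuous_const.add (continuous_pow 2)) (fun x => (by positivity : (0:ℝ) < 1 + x ^ 2).ne')).pow k).continuousOn
  · apply Complex.continuous_exp.comp_continuousOn
    exact continuousOn_const.mul (Complex.continuous_ofReal.comp_continuousOn
      (Real.continuousOn_log.mono fun x hx => (mem_Ioi.mp hx).ne'))

lemma Hc_int1 (α : ℝ) : IntegrableOn (Hc 1 α) (Ioi 0) := by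
  apply Integrable.mono' (((integrable_inv_one_add_sq).const_mul 2).integrableOn)
    ((Hc_contOn 1 α).aestronglyMeasurable measurableSet_Ioi)
  rw [ae_restrict_iff' measurableSet_Ioi]
  filter_upwards with x hx
  have hx' := mem_Ioi.mp hx
  rw [Hc_norm 1 α hx', pow_one]
  rw [show x⁻¹ * (2 * x / (1 + x ^ 2)) = 2 * (1 + x ^ 2)⁻¹ by field_simp [hx'.ne']]

lemma Hc_int3 (α : ℝ) : IntegrableOn (Hc 3 α) (Ioi 0) := by
  apply Integrable.mono' (((integrable_inv_one_add_sq).const_mul 8).integrableOn)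
    ((Hc_contOn 3 α).aestronglyMeasurable measurableSet_Ioi)
  rw [ae_restrict_iff' measurableSet_Ioi]
  filter_upwards with x hx
  have hx' := mem_Ioi.mp hx
  rw [Hc_norm 3 α hx']
  have h1 : (0:ℝ) < 1 + x ^ 2 := by positivity
  rw [show x⁻¹ * (2 * x / (1 + x ^ 2)) ^ 3 = 8 * x ^ 2 / (1 + x ^ 2) ^ 3 by
    field_simp [hx'.ne']; ring]
  rw [div_le_iff₀ (by positivity), mul_comm (8:ℝ) (1 + x ^ 2)⁻¹, mul_assoc]
  rw [inv_mul_eq_div, le_div_iff₀ h1]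
  nlinarith [sq_nonneg x, sq_nonneg (x^2), sq_nonneg (1 + x^2)]

lemma step3_1 (α : ℝ) :
    (∫ x in Ioi (0:ℝ), Hc 1 α x)
      = ∫ y in Ioi (0:ℝ), (y:ℂ) ^ ((1 + Complex.I*α)/2 - 1) / ((1 + y : ℝ) : ℂ) := by
  rw [← integral_comp_rpow_Ioi
    (fun y : ℝ => (y:ℂ) ^ ((1 + Complex.I*α)/2 - 1) / ((1 + y : ℝ) : ℂ)) two_ne_zero]
  apply setIntegral_congr_fun measurableSet_Ioi
  intro x hx
  have hx' := mem_Ioi.mp hx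
  have hrp : x ^ (2:ℝ) = x ^ 2 := by
    rw [show (2:ℝ) = ((2:ℕ):ℝ) by norm_num, Real.rpow_natCast]
  have hrp1 : x ^ ((2:ℝ) - 1) = x := by norm_num
  have hx2 : (0:ℝ) < x ^ 2 := by positivity
  simp only [hrp, hrp1]
  rw [cpow_pos_eq hx2, Real.log_pow, Hc, Complex.real_smul]
  have hexp : ((1 + Complex.I*(α:ℂ))/2 - 1) * (((2:ℕ) * Real.log x : ℝ) : ℂ)
      = Complex.I*(α:ℂ)*(Real.log x : ℂ) + ((-Real.log x : ℝ) : ℂ) := by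
    push_cast; ring
  rw [hexp, Complex.exp_add, ← Complex.ofReal_exp, Real.exp_neg, Real.exp_log hx']
  rw [abs_of_pos (by norm_num : (0:ℝ) < 2)]
  push_cast [hx'.ne']
  ring

lemma I1 (α : ℝ) :
    (∫ s : ℝ, sech s ^ 1 * Real.cos (α * s)) = π / Real.cosh (π * α / 2) := by
  have hre : ((1 + Complex.I*(α:ℂ))/2).re = 1/2 := by
    simp [Complex.div_re, Complex.add_re, Complex.mul_re]
  have hsin : Complex.sin ((Real.pi:ℂ) * ((1 + Complex.I*(α:ℂ))/2))
      = ((Real.cosh (Real.pi*α/2) : ℝ) : ℂ) := by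
    have harg : ((Real.pi:ℂ)) * ((1 + Complex.I*(α:ℂ))/2)
        = ((Real.pi/2 : ℝ) : ℂ) + ((Real.pi*α/2 : ℝ) : ℂ) * Complex.I := by push_cast; ring
    rw [harg, Complex.sin_add, ← Complex.ofReal_sin, ← Complex.ofReal_cos,
      Real.sin_pi_div_two, Real.cos_pi_div_two, Complex.cos_mul_I, ← Complex.ofReal_cosh]
    simp
  have hval := B1 (u := (1 + Complex.I*(α:ℂ))/2) (by rw [hre]; norm_num) (by rw [hre]; norm_num)
  have h2 : (∫ x in Ioi (0:ℝ), x⁻¹ * ((2 * x / (1 + x ^ 2)) ^ 1 * Real.cos (α * Real.log x)))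
      = (∫ x in Ioi (0:ℝ), Hc 1 α x).re := by
    have h := integral_re (Hc_int1 α)
    simp only [RCLike.re_to_complex] at h
    rw [← h]
    exact setIntegral_congr_fun measurableSet_Ioi fun x hx => (Hc_re 1 α x).symm
  rw [step1 1 α, h2, step3_1 α, hval, hsin, ← Complex.ofReal_div, Complex.ofReal_re]

lemma step3_3 (α : ℝ) :
    (∫ x in Ioi (0:ℝ), Hc 3 α x)
      = ∫ y in Ioi (0:ℝ),
          (4:ℂ) * ((y:ℂ) ^ ((3 + Complex.I*α)/2 - 1) / ((1 + y : ℝ) : ℂ) ^ (3:ℂ)) := by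
  rw [← integral_comp_rpow_Ioi
    (fun y : ℝ => (4:ℂ) * ((y:ℂ) ^ ((3 + Complex.I*α)/2 - 1) / ((1 + y : ℝ) : ℂ) ^ (3:ℂ)))
    two_ne_zero]
  apply setIntegral_congr_fun measurableSet_Ioi
  intro x hx
  have hx' := mem_Ioi.mp hx
  have hrp : x ^ (2:ℝ) = x ^ 2 := by
    rw [show (2:ℝ) = ((2:ℕ):ℝ) by norm_num, Real.rpow_natCast]
  have hrp1 : x ^ ((2:ℝ) - 1) = x := by norm_num
  have hx2 : (0:ℝ) < x ^ 2 := by positivity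
  simp only [hrp, hrp1]
  have hc3 : ((1 + x^2 : ℝ) : ℂ) ^ (3:ℂ) = (((1+x^2)^3 : ℝ) : ℂ) := by
    rw [show (3:ℂ) = ((3:ℕ):ℂ) by norm_num, Complex.cpow_natCast]
    push_cast; ring
  rw [cpow_pos_eq hx2, Real.log_pow, Hc, Complex.real_smul, hc3]
  have hexp : ((3 + Complex.I*(α:ℂ))/2 - 1) * (((2:ℕ) * Real.log x : ℝ) : ℂ)
      = Complex.I*(α:ℂ)*(Real.log x : ℂ) + ((Real.log x : ℝ) : ℂ) := by
    push_cast; ring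
  rw [hexp, Complex.exp_add, ← Complex.ofReal_exp, Real.exp_log hx']
  rw [abs_of_pos (by norm_num : (0:ℝ) < 2)]
  have hreal : x⁻¹ * (2 * x / (1 + x ^ 2)) ^ 3 = 8 * x^2 / (1+x^2)^3 := by
    field_simp [hx'.ne']
    ring
  rw [hreal]
  push_cast
  ring

lemma sin_shift (α : ℝ) : Complex.sin (((π/2 : ℝ) : ℂ) + ((π*α/2 : ℝ) : ℂ) * Complex.I)
    = ((Real.cosh (π*α/2) : ℝ) : ℂ) := by
  rw [Complex.sin_add, ← Complex.ofReal_sin, ← Complex.ofReal_cos,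
    Real.sin_pi_div_two, Real.cos_pi_div_two, Complex.cos_mul_I, ← Complex.ofReal_cosh]
  simp

lemma I3 (α : ℝ) :
    (∫ s : ℝ, sech s ^ 3 * Real.cos (α * s))
      = π * (α^2 + 1) / (2 * Real.cosh (π * α / 2)) := by
  have hre : ((3 + Complex.I*(α:ℂ))/2).re = 3/2 := by
    simp [Complex.div_re, Complex.add_re, Complex.mul_re]
  have hu1 : ((3 + Complex.I*(α:ℂ))/2) ≠ 1 := by
    intro h
    have := congrArg Complex.re h
    rw [hre, Complex.one_re] at this
    norm_num at this
  have hu2 : ((3 + Complex.I*(α:ℂ))/2) ≠ 2 := by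
    intro h
    have := congrArg Complex.re h
    rw [hre] at this
    simp at this
    norm_num at this
  have hsin : Complex.sin ((π:ℂ) * ((3 + Complex.I*(α:ℂ))/2))
      = -((Real.cosh (π*α/2) : ℝ) : ℂ) := by
    have harg : ((π:ℂ)) * ((3 + Complex.I*(α:ℂ))/2)
        = ((π : ℝ) : ℂ) + (((π/2 : ℝ) : ℂ) + ((π*α/2 : ℝ) : ℂ) * Complex.I) := by
      push_cast; ring
    rw [harg, Complex.sin_add, ← Complex.ofReal_sin, ← Complex.ofReal_cos,
      Real.sin_pi, Real.cos_pi, sin_shift]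
    push_cast
    ring
  have hval := B3 (u := (3 + Complex.I*(α:ℂ))/2) (by rw [hre]; norm_num) (by rw [hre]; norm_num)
    hu1 hu2
  have hprod : (2 - (3 + Complex.I*(α:ℂ))/2) * (1 - (3 + Complex.I*(α:ℂ))/2)
      = -(1 + (α:ℂ)^2)/4 := by
    linear_combination ((α:ℂ)^2/4) * Complex.I_sq
  have h2 : (∫ x in Ioi (0:ℝ), x⁻¹ * ((2 * x / (1 + x ^ 2)) ^ 3 * Real.cos (α * Real.log x)))
      = (∫ x in Ioi (0:ℝ), Hc 3 α x).re := by
    have h := integral_re (Hc_int3 α)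
    simp only [RCLike.re_to_complex] at h
    rw [← h]
    exact setIntegral_congr_fun measurableSet_Ioi fun x hx => (Hc_re 3 α x).symm
  have hcne : ((Real.cosh (π*α/2) : ℝ) : ℂ) ≠ 0 := by
    exact_mod_cast (Real.cosh_pos (x := π*α/2)).ne'
  have hfin : (4:ℂ) * ((2 - (3 + Complex.I*(α:ℂ))/2) * (1 - (3 + Complex.I*(α:ℂ))/2)
        * ((π:ℂ) / Complex.sin ((π:ℂ) * ((3 + Complex.I*(α:ℂ))/2))) / 2)
      = ((π * (α^2 + 1) / (2 * Real.cosh (π * α / 2)) : ℝ) : ℂ) := by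
    rw [hprod, hsin]
    push_cast
    field_simp
    ring
  rw [step1 3 α, h2, step3_3 α, MeasureTheory.integral_const_mul, hval, hfin, Complex.ofReal_re]

theorem melnikov_drive_integral (Ω₀ ω : ℝ) (hΩ : 0 < Ω₀) :
    ∫ t : ℝ, 2 * Ω₀ * sech (Ω₀ * t) * (1 - 2 * (sech (Ω₀ * t)) ^ 2) * Real.cos (ω * t)
      = -2 * Real.pi * (ω / Ω₀) ^ 2 / Real.cosh (Real.pi * ω / (2 * Ω₀)) := by
  set α : ℝ := ω / Ω₀ with hα
  have hΩ' : Ω₀ ≠ 0 := hΩ.ne'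
  have hF : ∀ t : ℝ, 2 * Ω₀ * sech (Ω₀ * t) * (1 - 2 * (sech (Ω₀ * t)) ^ 2) * Real.cos (ω * t)
      = (fun s => 2 * Ω₀ * (sech s ^ 1 * Real.cos (α * s))
          - 4 * Ω₀ * (sech s ^ 3 * Real.cos (α * s))) (Ω₀ * t) := by
    intro t
    have : α * (Ω₀ * t) = ω * t := by rw [hα, ← mul_assoc, div_mul_cancel₀ ω hΩ']
    simp only [this]
    ring
  rw [integral_congr_ae (Filter.Eventually.of_forall hF),
    MeasureTheory.Measure.integral_comp_mul_left
    (fun s => 2 * Ω₀ * (sech s ^ 1 * Real.cos (α * s))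
      - 4 * Ω₀ * (sech s ^ 3 * Real.cos (α * s))) Ω₀]
  have hI1 := (integrable_sech_pow_cos 1 one_ne_zero α).const_mul (2 * Ω₀)
  have hI3 := (integrable_sech_pow_cos 3 three_ne_zero α).const_mul (4 * Ω₀)
  rw [integral_sub hI1 hI3, MeasureTheory.integral_const_mul, MeasureTheory.integral_const_mul,
    I1 α, I3 α]
  have hcosh : Real.cosh (π * α / 2) = Real.cosh (π * ω / (2 * Ω₀)) := by
    congr 1
    rw [hα]
    ring
  have hc := Real.cosh_pos (x := π * α / 2)
  rw [smul_eq_mul, abs_of_pos (by positivity : (0:ℝ) < Ω₀⁻¹), ← hcosh]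
  field_simp [hα]
  ring
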